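/- arXiv:1702.03608 — 2 statements merged into one kernel-verified Lean document; each statement's English description precedes it below -/
import Mathlib

section
/- Let f(x) = Σ_{i=0}^n a_i x^{n-i} ∈ K{x, δ₁} be monic (a₀ = 1) with n ≥ 1, and set r = min_i { v(a_i)/i } (over i with a_i ≠ 0). Write r = p/q in lowest terms with q > 0 and suppose r < 0. Then, after the base change to ℂ((s)) with s = t^{1/q} and substitution x = s^p X, the polynomial g(X) = s^{−np} f(s^p X) is a monic twisted polynomial of degree n in X with coefficients in ℂ[[s]], for the derivation (1/q) s^{1−p} d/ds. -/
set_option maxHeartbeats 1000000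
set_option synthInstance.maxHeartbeats 1000000

noncomputable section

/-- `K = ℂ((t))`, the field of formal Laurent series. -/
abbrev K : Type := LaurentSeries ℂ

/-- The derivation `d = t * d/dt` on `K`, acting on coefficients by `cₙ ↦ n * cₙ`. -/
def dd : K →ₗ[ℂ] K where
  toFun f :=
    { coeff := fun n => (n : ℂ) * f.coeff n
      isPWO_support' := f.isPWO_support'.mono (fun n hn => by
        simp only [Function.mem_support, ne_eq] at hn ⊢
        exact fun h => hn (by rw [h, mul_zero])) }
  map_add' f g := by
    ext n
    simp [mul_add]
  map_smul' c f := by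
    ext n
    simp [HahnSeries.coeff_smul]
    ring

/-- Multiplication by `a ∈ K` as a `ℂ`-linear endomorphism of `K`. -/
def mulOp (a : K) : Module.End ℂ K where
  toFun f := a * f
  map_add' := mul_add a
  map_smul' c f := by
    simp only [RingHom.id_apply]
    rw [← HahnSeries.single_zero_mul_eq_smul, ← HahnSeries.single_zero_mul_eq_smul]
    ring

/-- `d = t d/dt` as an endomorphism. -/
def ddE : Module.End ℂ K := dd

/-- The element `t ∈ K`. -/
def tK : K := HahnSeries.single (1 : ℤ) (1 : ℂ)

/-- The element `t^i ∈ K` for `i : ℤ`. -/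
def tpow (i : ℤ) : K := HahnSeries.single i (1 : ℂ)

/-- The operator corresponding to the variable `x` of the twisted polynomial ring
`K{x, δ_m}`, i.e. the derivation `δ_m = t^m d/dt = t^(m-1) ⬝ (t d/dt)`. -/
def Xop (m : ℕ) : Module.End ℂ K := mulOp (tK ^ (m - 1)) * ddE

/-- The inclusion `O = ℂ[[t]] → K`. -/
def ofPS : PowerSeries ℂ →+* K := HahnSeries.ofPowerSeries ℤ ℂ

/-- The operator attached to a twisted polynomial `Σ_{i ≤ n} a_i x^i` with
coefficients `a_i ∈ O = ℂ[[t]]`, in `K{x, δ_m}`. -/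
def opO (m n : ℕ) (a : ℕ → PowerSeries ℂ) : Module.End ℂ K :=
  ∑ i ∈ Finset.range (n + 1), mulOp (ofPS (a i)) * (Xop m) ^ i

/-- Reduction mod `t` of a twisted polynomial with coefficients in `O`. -/
def red (n : ℕ) (a : ℕ → PowerSeries ℂ) : Polynomial ℂ :=
  ∑ i ∈ Finset.range (n + 1), Polynomial.C (PowerSeries.constantCoeff (R := ℂ) (a i)) * Polynomial.X ^ i

/-- The embedding `K → K`, `t ↦ t^q`, realising `K` as the subfield `ℂ((s^q)) ⊆ ℂ((s))`. -/
def embHom (q : ℕ) (hq : 0 < q) : K →+* K :=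
  HahnSeries.embDomainRingHom (AddMonoidHom.mk' (fun n => (q : ℤ) * n) (by intro a b; ring))
    (fun a b h => by
      simpa using mul_left_cancel₀ (by exact_mod_cast hq.ne' : (q : ℤ) ≠ 0) h)
    (fun a b => by
      constructor
      · intro h; exact le_of_mul_le_mul_left h (by exact_mod_cast hq)
      · intro h; exact mul_le_mul_of_nonneg_left h (by positivity))


/-! ### Auxiliary lemmas -/

section MyAux

lemma myddE_coeff (f : K) (d : ℤ) : (ddE f).coeff d = (d : ℂ) * f.coeff d := rfl

lemma mymulOp_apply (a f : K) : mulOp a f = a * f := rfl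

lemma mymulOp_mul (a b : K) : mulOp (a * b) = mulOp a * mulOp b := by
  ext f
  simp [mymulOp_apply, Module.End.mul_apply, mul_assoc]

lemma mymulOp_one : mulOp (1 : K) = 1 := by
  ext f
  simp [mymulOp_apply]

/-- `mulOp` as a linear map. -/
def mulOpL : K →ₗ[ℂ] Module.End ℂ K where
  toFun := mulOp
  map_add' a b := by
    ext f; simp [mymulOp_apply, add_mul]
  map_smul' z a := by
    refine LinearMap.ext fun f => ?_
    show (z • a) * f = z • (a * f)
    rw [← HahnSeries.single_zero_mul_eq_smul, ← HahnSeries.single_zero_mul_eq_smul]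
    ring

lemma mytpow_add (a b : ℤ) : tpow a * tpow b = tpow (a + b) := by
  simp [tpow, HahnSeries.single_mul_single]

lemma mytpow_zero : tpow 0 = 1 := HahnSeries.single_zero_one

lemma mytpow_mul_coeff (m : ℤ) (f : K) (d : ℤ) :
    (tpow m * f).coeff d = f.coeff (d - m) := by
  have : (tpow m * f).coeff (d - m + m) = 1 * f.coeff (d - m) :=
    HahnSeries.coeff_single_mul_add
  simpa using this

lemma myddE_comm (m : ℤ) :
    ddE * mulOp (tpow m) = mulOp (tpow m) * ddE + (m : ℂ) • mulOp (tpow m) := by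
  ext f d
  simp only [Module.End.mul_apply, LinearMap.add_apply, LinearMap.smul_apply,
    mymulOp_apply, myddE_coeff, HahnSeries.coeff_add, HahnSeries.coeff_smul,
    mytpow_mul_coeff, smul_eq_mul]
  push_cast
  ring

lemma myD_comm (q : ℕ) (m : ℤ) :
    ((q : ℂ)⁻¹ • ddE) * mulOp (tpow m) =
      mulOp (tpow m) * ((q : ℂ)⁻¹ • ddE) + ((m : ℂ) / q) • mulOp (tpow m) := by
  rw [smul_mul_assoc, myddE_comm, smul_add, mul_smul_comm, smul_smul]
  congr 2
  field_simp

/-- The new variable `X = s^(-p) ⬝ D`. -/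
def Xq (p : ℤ) (q : ℕ) : Module.End ℂ K := mulOp (tpow (-p)) * ((q : ℂ)⁻¹ • ddE)

/-- `Q k = s^(kp) X^k`, a monic polynomial of degree `k` in `D`. -/
def Qop (p : ℤ) (q : ℕ) (k : ℕ) : Module.End ℂ K :=
  mulOp (tpow ((k : ℤ) * p)) * (Xq p q) ^ k

/-- The change-of-basis coefficients (generalized Stirling numbers) between powers of `D`
and the products `Q k`. -/
def al (lam : ℂ) : ℕ → ℕ → ℂ
  | 0, 0 => 1
  | 0, _ + 1 => 0
  | _ + 1, 0 => 0
  | j + 1, k + 1 => al lam j k + ((k : ℂ) + 1) * lam * al lam j (k + 1)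

lemma al_eq_zero (lam : ℂ) : ∀ {j k : ℕ}, j < k → al lam j k = 0
  | 0, _ + 1, _ => rfl
  | j + 1, k + 1, h => by
    rw [al, al_eq_zero lam (by omega), al_eq_zero lam (by omega), mul_zero, add_zero]

lemma al_diag (lam : ℂ) : ∀ j, al lam j j = 1
  | 0 => rfl
  | j + 1 => by
    rw [al, al_diag lam j, al_eq_zero lam (Nat.lt_succ_self j), mul_zero, add_zero]

lemma D_mul_Qop (p : ℤ) (q : ℕ) (k : ℕ) :
    ((q : ℂ)⁻¹ • ddE) * Qop p q k =
      Qop p q (k + 1) + ((k : ℂ) * ((p : ℂ) / q)) • Qop p q k := by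
  have key : mulOp (tpow (((k : ℕ) + 1 : ℤ) * p)) * (Xq p q) ^ (k + 1)
      = mulOp (tpow ((k : ℤ) * p)) * ((q : ℂ)⁻¹ • ddE) * (Xq p q) ^ k := by
    rw [pow_succ', ← mul_assoc]
    congr 1
    rw [Xq, ← mul_assoc, ← mymulOp_mul, mytpow_add]
    congr 2
    ring
  have hsc : ((((k : ℤ) * p : ℤ)) : ℂ) / (q : ℂ) = (k : ℂ) * ((p : ℂ) / q) := by
    push_cast; ring
  simp only [Qop]
  rw [← mul_assoc, myD_comm, add_mul, smul_mul_assoc, hsc]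
  congr 1
  push_cast at key ⊢
  rw [key]

lemma Dpow_eq (p : ℤ) (q : ℕ) : ∀ j : ℕ,
    ((q : ℂ)⁻¹ • ddE) ^ j =
      ∑ k ∈ Finset.range (j + 1), al ((p : ℂ) / q) j k • Qop p q k
  | 0 => by
    rw [pow_zero, show (0 : ℕ) + 1 = 1 from rfl, Finset.sum_range_one]
    simp [al_diag, Qop, mytpow_zero, mymulOp_one]
  | j + 1 => by
    set lam : ℂ := (p : ℂ) / q with hlam
    rw [pow_succ', Dpow_eq p q j, Finset.mul_sum]
    have hterm : ∀ k, ((q : ℂ)⁻¹ • ddE) * (al lam j k • Qop p q k) =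
        al lam j k • Qop p q (k + 1) + (al lam j k * ((k : ℂ) * lam)) • Qop p q k := by
      intro k
      rw [mul_smul_comm, D_mul_Qop, smul_add, smul_smul]
    rw [Finset.sum_congr rfl fun k _ => hterm k, Finset.sum_add_distrib]
    rw [Finset.sum_range_succ' (fun k => al lam (j + 1) k • Qop p q k) (j + 1)]
    have h0 : al lam (j + 1) 0 • Qop p q 0 = 0 := by
      rw [show al lam (j + 1) 0 = 0 from rfl, zero_smul]
    rw [h0, add_zero]
    have hsucc : ∀ i, al lam (j + 1) (i + 1) • Qop p q (i + 1) =
        al lam j i • Qop p q (i + 1) + (((i : ℂ) + 1) * lam * al lam j (i + 1)) • Qop p q (i + 1) := by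
      intro i
      rw [al, add_smul]
    rw [Finset.sum_congr rfl fun i _ => hsucc i, Finset.sum_add_distrib]
    congr 1
    -- remaining: ∑ k ∈ range (j+1), (al j k * (k * lam)) • Q k
    --          = ∑ i ∈ range (j+1), ((i+1) * lam * al j (i+1)) • Q (i+1)
    rw [Finset.sum_range_succ (fun i => (((i : ℂ) + 1) * lam * al lam j (i + 1)) • Qop p q (i + 1)) j,
      al_eq_zero lam (Nat.lt_succ_self j), mul_zero, zero_smul, add_zero]
    rw [Finset.sum_range_succ' (fun k => (al lam j k * ((k : ℂ) * lam)) • Qop p q k) j]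
    simp only [Nat.cast_zero, zero_mul, mul_zero, zero_smul, add_zero]
    refine Finset.sum_congr rfl fun i _ => ?_
    congr 1
    push_cast
    ring

lemma mymulOpL_apply (a : K) : mulOpL a = mulOp a := rfl

lemma embHom_coeff (q : ℕ) (hq : 0 < q) (x : K) (i : ℤ) :
    (embHom q hq x).coeff ((q : ℤ) * i) = x.coeff i := by
  exact HahnSeries.embDomain_coeff (a := i)

lemma embHom_coeff_zero (q : ℕ) (hq : 0 < q) (x : K) (d : ℤ)
    (hd : ∀ i : ℤ, (q : ℤ) * i ≠ d) : (embHom q hq x).coeff d = 0 := by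
  apply HahnSeries.embDomain_notin_range
  rintro ⟨i, hi⟩
  exact hd i hi

lemma embHom_support (q : ℕ) (hq : 0 < q) (x : K) {d : ℤ}
    (h : (embHom q hq x).coeff d ≠ 0) : ∃ i : ℤ, d = (q : ℤ) * i ∧ x.coeff i ≠ 0 := by
  by_cases hdr : ∃ i : ℤ, (q : ℤ) * i = d
  · obtain ⟨i, rfl⟩ := hdr
    exact ⟨i, rfl, by rwa [embHom_coeff] at h⟩
  · exact absurd (embHom_coeff_zero q hq x d fun i hi => hdr ⟨i, hi⟩) h

lemma coeff_sum {s : Finset ℕ} (f : ℕ → K) (d : ℤ) :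
    (∑ j ∈ s, f j).coeff d = ∑ j ∈ s, (f j).coeff d :=
  map_sum (HahnSeries.coeff.addMonoidHom d) f s

end MyAux

/-- Change of variables: for monic `f = Σ_{i} a_i x^(n-i) ∈ K{x, δ₁}` with
`r = min v(a_i)/i = p/q < 0` in lowest terms, after base change `t = s^q` and the
substitution `x = s^p X`, the polynomial `g(X) = s^(-np) f(s^p X)` is monic of degree `n`
with coefficients in `ℂ[[s]]`, for the derivation `(1/q) s^(1-p) d/ds`.  Here the original
`x` acts on `ℂ((s))` as `t d/dt = (1/q) s d/ds` and the new variable `X` as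
`s^(-p) ⬝ (1/q) s d/ds = (1/q) s^(1-p) d/ds`. -/
theorem stmt_8 (n : ℕ) (hn : 1 ≤ n) (c : ℕ → K) (hmonic : c n = 1)
    (p : ℤ) (q : ℕ) (hq : 0 < q) (hcop : Int.gcd p (q : ℤ) = 1)
    (hneg : (p : ℚ) / (q : ℚ) < 0)
    (hmin : ∀ i, 1 ≤ i → i ≤ n → c (n - i) ≠ 0 →
      (p : ℚ) / (q : ℚ) ≤ ((c (n - i)).order : ℚ) / (i : ℚ))
    (hattain : ∃ i, 1 ≤ i ∧ i ≤ n ∧ c (n - i) ≠ 0 ∧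
      (p : ℚ) / (q : ℚ) = ((c (n - i)).order : ℚ) / (i : ℚ)) :
    ∃ b : ℕ → PowerSeries ℂ, b n = 1 ∧
      mulOp (tpow (-((n : ℤ) * p))) *
          (∑ j ∈ Finset.range (n + 1), mulOp (embHom q hq (c j)) * ((q : ℂ)⁻¹ • ddE) ^ j) =
        ∑ j ∈ Finset.range (n + 1),
          mulOp (ofPS (b j)) * (mulOp (tpow (-p)) * ((q : ℂ)⁻¹ • ddE)) ^ j := by
  classical
  set lam : ℂ := (p : ℂ) / q with hlam
  set E : K →+* K := embHom q hq with hE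
  have hp : p < 0 := by
    by_contra hp0
    push_neg at hp0
    have : (0 : ℚ) ≤ (p : ℚ) / (q : ℚ) :=
      div_nonneg (by exact_mod_cast hp0) (by positivity)
    linarith
  -- order bound: for j ≤ n with c j ≠ 0, (n - j) * p ≤ q * order (c j)
  have horder : ∀ j, j ≤ n → c j ≠ 0 → ((n : ℤ) - j) * p ≤ (q : ℤ) * (c j).order := by
    intro j hj hcj
    rcases eq_or_lt_of_le hj with rfl | hjn
    · rw [hmonic, HahnSeries.order_one, mul_zero, sub_self, zero_mul]
    · have h1 : 1 ≤ n - j := by omega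
      have h2 : n - j ≤ n := by omega
      have h3 : n - (n - j) = j := by omega
      have hm := hmin (n - j) h1 h2 (by rw [h3]; exact hcj)
      rw [h3] at hm
      have hq' : (0 : ℚ) < (q : ℚ) := by positivity
      have hnj : (0 : ℚ) < ((n - j : ℕ) : ℚ) := by exact_mod_cast h1
      rw [div_le_div_iff₀ hq' hnj] at hm
      have hcast : ((n - j : ℕ) : ℚ) = ((n : ℤ) : ℚ) - ((j : ℤ) : ℚ) := by
        push_cast [Nat.cast_sub hj]
        ring
      rw [hcast] at hm
      have : (((n : ℤ) - j) * p : ℚ) ≤ ((q : ℤ) * (c j).order : ℚ) := by push_cast at hm ⊢; nlinarith [hm]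
      exact_mod_cast this
  -- the K-valued coefficients of the transformed polynomial
  set bK : ℕ → K := fun k => ∑ j ∈ Finset.range (n + 1),
      al lam j k • (tpow ((k : ℤ) * p - (n : ℤ) * p) * E (c j)) with hbK
  -- negative coefficients of bK k vanish
  have hneg0 : ∀ k, k ≤ n → ∀ d : ℤ, d < 0 → (bK k).coeff d = 0 := by
    intro k hk d hd
    rw [hbK]
    simp only []
    rw [coeff_sum]
    refine Finset.sum_eq_zero fun j hj => ?_
    have hjn : j ≤ n := by
      have := Finset.mem_range.mp hj; omega
    rw [HahnSeries.coeff_smul]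
    rcases le_or_gt k j with hkj | hjk
    · by_cases hcj : c j = 0
      · rw [hE, hcj, map_zero, mul_zero, HahnSeries.coeff_zero, smul_zero]
      · rw [mytpow_mul_coeff]
        by_cases hz : (E (c j)).coeff (d - ((k : ℤ) * p - (n : ℤ) * p)) = 0
        · rw [hz, smul_zero]
        · exfalso
          obtain ⟨i, hi, hci⟩ := embHom_support q hq (c j) hz
          have hord : (c j).order ≤ i := HahnSeries.order_le_of_coeff_ne_zero hci
          have h1 : (q : ℤ) * (c j).order ≤ (q : ℤ) * i :=
            mul_le_mul_of_nonneg_left hord (by positivity)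
          have h2 : ((n : ℤ) - j) * p ≤ (q : ℤ) * i := le_trans (horder j hjn hcj) h1
          have h3 : 0 ≤ ((j : ℤ) - k) * (-p) :=
            mul_nonneg (by exact_mod_cast sub_nonneg.mpr (show (k:ℤ) ≤ j by exact_mod_cast hkj))
              (by omega)
          linarith [hi, h2, h3, hd]
    · rw [al_eq_zero lam hjk, zero_smul]
  -- the power series
  have hofPS : ∀ k, k ≤ n → ofPS (PowerSeries.mk fun m => (bK k).coeff m) = bK k := by
    intro k hk
    apply HahnSeries.ext
    funext d
    rcases lt_or_ge d 0 with hd | hd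
    · rw [hneg0 k hk d hd, ofPS, HahnSeries.ofPowerSeries_apply, HahnSeries.embDomain_notin_range]
      rintro ⟨m, hm⟩
      have hm : ((m : ℕ) : ℤ) = d := hm
      omega
    · obtain ⟨m, rfl⟩ := Int.eq_ofNat_of_zero_le hd
      rw [ofPS, HahnSeries.ofPowerSeries_apply_coeff, PowerSeries.coeff_mk]
  have hbKn : bK n = 1 := by
    rw [hbK]
    simp only []
    rw [Finset.sum_eq_single n]
    · rw [al_diag, one_smul, sub_self, mytpow_zero, one_mul, hmonic, map_one]
    · intro j hj hjn
      have : j < n := by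
        have := Finset.mem_range.mp hj; omega
      rw [al_eq_zero lam this]
      exact zero_smul ℂ (tpow ((n : ℤ) * p - (n : ℤ) * p) * E (c j))
    · intro h
      exact absurd (Finset.self_mem_range_succ n) h
  refine ⟨fun k => PowerSeries.mk fun m => (bK k).coeff m, ?_, ?_⟩
  · -- monicity
    apply HahnSeries.ofPowerSeries_injective (Γ := ℤ) (R := ℂ)
    show ofPS _ = ofPS 1
    rw [hofPS n le_rfl, hbKn, map_one]
  · -- the operator identity
    have hprod : ∀ j k : ℕ,
        mulOp (tpow (-((n : ℤ) * p))) * (mulOp (E (c j)) * Qop p q k) =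
          mulOp (tpow ((k : ℤ) * p - (n : ℤ) * p) * E (c j)) * Xq p q ^ k := by
      intro j k
      simp only [Qop]
      rw [← mul_assoc, ← mul_assoc, ← mymulOp_mul, ← mymulOp_mul]
      congr 2
      have h1 : tpow (-((n : ℤ) * p)) * E (c j) * tpow ((k : ℤ) * p) =
          tpow (-((n : ℤ) * p)) * tpow ((k : ℤ) * p) * E (c j) := by ring
      have h2 : -((n : ℤ) * p) + (k : ℤ) * p = (k : ℤ) * p - (n : ℤ) * p := by ring
      rw [h1, mytpow_add, h2]
    calc mulOp (tpow (-((n : ℤ) * p))) *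
          ∑ j ∈ Finset.range (n + 1), mulOp (E (c j)) * ((q : ℂ)⁻¹ • ddE) ^ j
        = ∑ j ∈ Finset.range (n + 1), ∑ k ∈ Finset.range (n + 1),
            al lam j k • (mulOp (tpow ((k : ℤ) * p - (n : ℤ) * p) * E (c j)) * Xq p q ^ k) := by
          rw [Finset.mul_sum]
          refine Finset.sum_congr rfl fun j hj => ?_
          have hjn : j + 1 ≤ n + 1 := by
            have := Finset.mem_range.mp hj; omega
          rw [Dpow_eq p q j, Finset.mul_sum, Finset.mul_sum]
          rw [← Finset.sum_subset (Finset.range_subset_range.mpr hjn)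
            (fun k _ hk => by
              rw [al_eq_zero lam (by simp only [Finset.mem_range, not_lt] at hk; omega),
                zero_smul])]
          refine Finset.sum_congr rfl fun k _ => ?_
          rw [mul_smul_comm, mul_smul_comm, hprod]
      _ = ∑ k ∈ Finset.range (n + 1), mulOp (bK k) * Xq p q ^ k := by
          rw [Finset.sum_comm]
          refine Finset.sum_congr rfl fun k _ => ?_
          rw [hbK]
          simp only []
          rw [← mymulOpL_apply, map_sum, Finset.sum_mul]
          refine Finset.sum_congr rfl fun j _ => ?_
          rw [map_smul, mymulOpL_apply, smul_mul_assoc]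
      _ = ∑ j ∈ Finset.range (n + 1),
            mulOp (ofPS (PowerSeries.mk fun m => (bK j).coeff m)) *
              (mulOp (tpow (-p)) * ((q : ℂ)⁻¹ • ddE)) ^ j := by
          refine Finset.sum_congr rfl fun j hj => ?_
          rw [hofPS j (by have := Finset.mem_range.mp hj; omega)]
          rfl
end
end

section
/- (Unipotent classification, one direction) Let N be a nilpotent n×n complex matrix, and let D = d + N act on K^n where K = ℂ((t)) and d = t d/dt componentwise. Then ker(D^n) equals ℂ^n, the set of constant vectors, and D restricted to ker(D^n) equals N. -/
set_option maxHeartbeats 1000000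
set_option synthInstance.maxHeartbeats 1000000

noncomputable section

section Aux

lemma K_coeff_sum {α : Type*} (s : Finset α) (f : α → K) (k : ℤ) :
    (∑ j ∈ s, f j).coeff k = ∑ j ∈ s, (f j).coeff k := by
  classical
  induction s using Finset.induction with
  | empty => simp
  | insert _ _ h ih => simp [Finset.sum_insert h, HahnSeries.coeff_add, ih]

lemma alg_single (c : ℂ) : algebraMap ℂ K c = HahnSeries.single (0:ℤ) c := by
  rw [HahnSeries.algebraMap_apply', PowerSeries.algebraMap_apply, HahnSeries.ofPowerSeries_C,
    HahnSeries.C_apply]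
  simp

lemma dd_coeff (f : K) (k : ℤ) : (dd f).coeff k = (k:ℂ) * f.coeff k := rfl

lemma dd_const (c : ℂ) : dd (algebraMap ℂ K c) = 0 := by
  rw [alg_single]
  ext k
  rw [dd_coeff, HahnSeries.coeff_zero]
  rcases eq_or_ne k 0 with h | h
  · simp [h]
  · rw [HahnSeries.coeff_single_of_ne h, mul_zero]

lemma smul_alg (c x : ℂ) : c • algebraMap ℂ K x = algebraMap ℂ K (c * x) := by
  rw [alg_single, alg_single]
  ext k
  rw [HahnSeries.coeff_smul]
  rcases eq_or_ne k 0 with h | h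
  · simp [h]
  · rw [HahnSeries.coeff_single_of_ne h, HahnSeries.coeff_single_of_ne h, smul_zero]

lemma matrix_pow_card_eq_zero {m : ℕ} (N : Matrix (Fin m) (Fin m) ℂ) (hN : IsNilpotent N) :
    N ^ m = 0 := by
  have h := Matrix.isNilpotent_charpoly_sub_pow_of_isNilpotent hN
  have h0 : N.charpoly - Polynomial.X ^ (Fintype.card (Fin m)) = 0 := h.eq_zero
  have hc : N.charpoly = Polynomial.X ^ m := by
    simpa [sub_eq_zero, Fintype.card_fin] using h0
  have hch := Matrix.aeval_self_charpoly N
  rw [hc] at hch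
  simpa using hch

end Aux

/-- For nilpotent `N ∈ Mₙ(ℂ)` and `D = d + N` on `K^n`: `ker(D^n)` is exactly the set of
constant vectors `ℂ^n`, and `D` restricted to it is `N`. -/
theorem stmt_17 (n : ℕ) (N : Matrix (Fin n) (Fin n) ℂ) (hN : IsNilpotent N)
    (D : (Fin n → K) → (Fin n → K))
    (hD : ∀ (v : Fin n → K) (i : Fin n), D v i = dd (v i) + ∑ j, N i j • v j) :
    (∀ v : Fin n → K, D^[n] v = 0 ↔ ∃ w : Fin n → ℂ, v = fun i => algebraMap ℂ K (w i)) ∧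
    (∀ w : Fin n → ℂ,
      D (fun i => algebraMap ℂ K (w i)) = fun i => algebraMap ℂ K (N.mulVec w i)) := by
  classical
  have hNn : N ^ n = 0 := matrix_pow_card_eq_zero N hN
  -- coefficientwise action of D
  have hDcoeff : ∀ (v : Fin n → K) (k : ℤ) (i : Fin n),
      ((D v) i).coeff k =
        (((k:ℂ) • (1 : Matrix (Fin n) (Fin n) ℂ) + N)).mulVec (fun j => (v j).coeff k) i := by
    intro v k i
    rw [hD]
    simp only [HahnSeries.coeff_add, K_coeff_sum, HahnSeries.coeff_smul, dd_coeff,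
      Matrix.mulVec, dotProduct, Matrix.add_apply, Matrix.smul_apply, Matrix.one_apply,
      smul_eq_mul, add_mul, mul_ite, mul_one, mul_zero, ite_mul, zero_mul,
      Finset.sum_add_distrib, Finset.sum_ite_eq, Finset.mem_univ, if_true]
  have hiter : ∀ (m : ℕ) (v : Fin n → K) (k : ℤ),
      (fun i => ((D^[m] v) i).coeff k) =
        ((((k:ℂ) • (1 : Matrix (Fin n) (Fin n) ℂ) + N)) ^ m).mulVec
          (fun j => (v j).coeff k) := by
    intro m
    induction m with
    | zero => intro v k; simp [Matrix.one_mulVec]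
    | succ m ih =>
      intro v k
      funext i
      rw [Function.iterate_succ_apply', hDcoeff]
      have : (fun j => ((D^[m] v) j).coeff k) =
          ((((k:ℂ) • (1 : Matrix (Fin n) (Fin n) ℂ) + N)) ^ m).mulVec
            (fun j => (v j).coeff k) := ih v k
      rw [this, Matrix.mulVec_mulVec, ← pow_succ']
  -- D on constants
  have hconst : ∀ w : Fin n → ℂ,
      D (fun i => algebraMap ℂ K (w i)) = fun i => algebraMap ℂ K (N.mulVec w i) := by
    intro w
    funext i
    rw [hD]
    rw [dd_const, zero_add]
    have : ∀ j, N i j • algebraMap ℂ K (w j) = algebraMap ℂ K (N i j * w j) :=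
      fun j => smul_alg _ _
    simp only [this, ← map_sum]
    rfl
  refine ⟨fun v => ⟨fun h => ?_, fun ⟨w, hw⟩ => ?_⟩, hconst⟩
  · -- forward direction
    refine ⟨fun i => (v i).coeff 0, ?_⟩
    funext i
    rw [alg_single]
    ext k
    rcases eq_or_ne k 0 with hk | hk
    · rw [hk, HahnSeries.coeff_single_same]
    · rw [HahnSeries.coeff_single_of_ne hk]
      -- show coeff k vanishes
      have hx := hiter n v k
      rw [h] at hx
      have hx0 : ((((k:ℂ) • (1 : Matrix (Fin n) (Fin n) ℂ) + N)) ^ n).mulVec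
          (fun j => (v j).coeff k) = 0 := by
        rw [← hx]; funext j; simp
      have hkc : (k:ℂ) ≠ 0 := Int.cast_ne_zero.mpr hk
      have hmul : ((k:ℂ) • (1 : Matrix (Fin n) (Fin n) ℂ)) *
          ((k:ℂ)⁻¹ • (1 : Matrix (Fin n) (Fin n) ℂ)) = 1 := by
        rw [smul_mul_assoc, mul_smul_comm, smul_smul, mul_inv_cancel₀ hkc, one_smul, mul_one]
      have hmul' : ((k:ℂ)⁻¹ • (1 : Matrix (Fin n) (Fin n) ℂ)) *
          ((k:ℂ) • (1 : Matrix (Fin n) (Fin n) ℂ)) = 1 := by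
        rw [smul_mul_assoc, mul_smul_comm, smul_smul, inv_mul_cancel₀ hkc, one_smul, mul_one]
      have h1 : IsUnit ((k:ℂ) • (1 : Matrix (Fin n) (Fin n) ℂ)) :=
        ⟨⟨_, _, hmul, hmul'⟩, rfl⟩
      have hu : IsUnit ((k:ℂ) • (1 : Matrix (Fin n) (Fin n) ℂ) + N) := by
        rw [add_comm]
        exact hN.isUnit_add_right_of_commute h1 ((Commute.one_right N).smul_right _)
      obtain ⟨u, hu'⟩ := hu.pow n
      have hzero : (fun j => (v j).coeff k) = 0 := by
        calc (fun j => (v j).coeff k)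
            = (1 : Matrix (Fin n) (Fin n) ℂ).mulVec (fun j => (v j).coeff k) :=
              (Matrix.one_mulVec _).symm
          _ = ((↑u⁻¹ : Matrix (Fin n) (Fin n) ℂ) * (↑u : Matrix (Fin n) (Fin n) ℂ)).mulVec (fun j => (v j).coeff k) := by
              rw [Units.inv_mul]
          _ = (↑u⁻¹ : Matrix (Fin n) (Fin n) ℂ).mulVec
                ((↑u : Matrix (Fin n) (Fin n) ℂ).mulVec (fun j => (v j).coeff k)) :=
              (Matrix.mulVec_mulVec _ _ _).symm
          _ = 0 := by rw [hu', hx0, Matrix.mulVec_zero]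
      exact congrFun hzero i
  · -- backward direction
    subst hw
    have key : ∀ m : ℕ, D^[m] (fun i => algebraMap ℂ K (w i)) =
        fun i => algebraMap ℂ K ((N ^ m).mulVec w i) := by
      intro m
      induction m with
      | zero => simp [Matrix.one_mulVec]
      | succ m ih =>
        rw [Function.iterate_succ_apply', ih, hconst]
        simp only [Matrix.mulVec_mulVec, ← pow_succ']
    rw [key n, hNn]
    funext i
    simp [Matrix.zero_mulVec]
end
end
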